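/- Let I ⊆ ℝ be an open interval, c ∈ ℝ, f : ℝ → ℝ twice differentiable on I with f(t) > 0 and f'(t) ≠ 0 on I, λ : ℝ → ℝ differentiable on I with λ(t) ≠ 0 on I, and μ : ℝ → ℝ a function on I. Assume that for all t ∈ I: μ(t)·λ(t) = f''(t)/f(t) and f(t)²λ(t)² = f'(t)² − c. Let θ : ℝ → ℝ be differentiable on I with sinh(θ(t)) ≠ 0 and cosh(θ(t))/sinh(θ(t)) = f'(t)/(f(t)·λ(t)) for all t ∈ I. Then θ'(t) = μ(t) for all t ∈ I. -/

import Mathlib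

/-- With `μ·λ = f''/f` and `f²λ² = f'² − c` on the open interval `I`
(`f > 0`, `f' ≠ 0`, `λ ≠ 0`, `λ` differentiable), if `coth θ = cosh θ/sinh θ = f'/(f·λ)`
with `sinh θ ≠ 0`, then `θ' = μ` on `I`. -/
theorem stmt_16 (a b c : ℝ) (f f' f'' lam μ θ θ' : ℝ → ℝ)
    (hf : ∀ t ∈ Set.Ioo a b, HasDerivAt f (f' t) t)
    (hf' : ∀ t ∈ Set.Ioo a b, HasDerivAt f' (f'' t) t)
    (hpos : ∀ t ∈ Set.Ioo a b, 0 < f t)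
    (hf'0 : ∀ t ∈ Set.Ioo a b, f' t ≠ 0)
    (hlamdiff : ∀ t ∈ Set.Ioo a b, DifferentiableAt ℝ lam t)
    (hlam0 : ∀ t ∈ Set.Ioo a b, lam t ≠ 0)
    (hmul : ∀ t ∈ Set.Ioo a b, μ t * lam t = f'' t / f t)
    (hrel : ∀ t ∈ Set.Ioo a b, f t ^ 2 * lam t ^ 2 = f' t ^ 2 - c)
    (hθ : ∀ t ∈ Set.Ioo a b, HasDerivAt θ (θ' t) t)
    (hsinh : ∀ t ∈ Set.Ioo a b, Real.sinh (θ t) ≠ 0)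
    (hcoth : ∀ t ∈ Set.Ioo a b,
      Real.cosh (θ t) / Real.sinh (θ t) = f' t / (f t * lam t)) :
    ∀ t ∈ Set.Ioo a b, θ' t = μ t := by
  intro t ht
  have hmem : Set.Ioo a b ∈ nhds t := isOpen_Ioo.mem_nhds ht
  have hfpos := hpos t ht
  have hf0 : f t ≠ 0 := hfpos.ne'
  have hl0 := hlam0 t ht
  have hS0 := hsinh t ht
  have hfl0 : f t * lam t ≠ 0 := mul_ne_zero hf0 hl0
  set S := Real.sinh (θ t) with hSdef
  set C := Real.cosh (θ t) with hCdef
  have hL : HasDerivAt lam (deriv lam t) t := (hlamdiff t ht).hasDerivAt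
  set L := deriv lam t
  -- cross-multiplied identity on the interval
  have hcross : ∀ x ∈ Set.Ioo a b,
      Real.cosh (θ x) * (f x * lam x) = f' x * Real.sinh (θ x) := by
    intro x hx
    have h := hcoth x hx
    have hs := hsinh x hx
    have hfl : f x * lam x ≠ 0 := mul_ne_zero (hpos x hx).ne' (hlam0 x hx)
    field_simp at h
    rw [h, div_mul_cancel₀ _ hfl]; ring
  -- E0
  have E0 : C * (f t * lam t) = f' t * S := hcross t ht
  -- derivative of f^2 lam^2 = f'^2 - c
  have h1 : HasDerivAt (fun x => f x ^ 2 * lam x ^ 2)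
      ((2 * f t ^ 1 * f' t) * lam t ^ 2 + f t ^ 2 * (2 * lam t ^ 1 * L)) t :=
    ((hf t ht).pow 2).mul (hL.pow 2)
  have h2 : HasDerivAt (fun x => f' x ^ 2 - c) (2 * f' t ^ 1 * f'' t) t :=
    ((hf' t ht).pow 2).sub_const c
  have heq1 : (fun x => f x ^ 2 * lam x ^ 2) =ᶠ[nhds t] (fun x => f' x ^ 2 - c) :=
    Filter.eventuallyEq_of_mem hmem hrel
  have E2 : (2 * f t ^ 1 * f' t) * lam t ^ 2 + f t ^ 2 * (2 * lam t ^ 1 * L)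
      = 2 * f' t ^ 1 * f'' t :=
    (h1).unique (h2.congr_of_eventuallyEq heq1)
  -- derivative of cosh θ * (f lam) = f' sinh θ
  have hsinhθ : HasDerivAt (fun x => Real.sinh (θ x)) (Real.cosh (θ t) * θ' t) t :=
    (Real.hasDerivAt_sinh (θ t)).comp t (hθ t ht)
  have hcoshθ : HasDerivAt (fun x => Real.cosh (θ x)) (Real.sinh (θ t) * θ' t) t :=
    (Real.hasDerivAt_cosh (θ t)).comp t (hθ t ht)
  have h3 : HasDerivAt (fun x => Real.cosh (θ x) * (f x * lam x))
      ((S * θ' t) * (f t * lam t) + C * (f' t * lam t + f t * L)) t :=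
    hcoshθ.mul ((hf t ht).mul hL)
  have h4 : HasDerivAt (fun x => f' x * Real.sinh (θ x))
      (f'' t * S + f' t * (C * θ' t)) t :=
    (hf' t ht).mul hsinhθ
  have heq2 : (fun x => Real.cosh (θ x) * (f x * lam x)) =ᶠ[nhds t]
      (fun x => f' x * Real.sinh (θ x)) :=
    Filter.eventuallyEq_of_mem hmem hcross
  have E1 : (S * θ' t) * (f t * lam t) + C * (f' t * lam t + f t * L)
      = f'' t * S + f' t * (C * θ' t) :=
    h3.unique (h4.congr_of_eventuallyEq heq2)
  have E3 : C ^ 2 = S ^ 2 + 1 := by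
    have := Real.cosh_sq_sub_sinh_sq (θ t); nlinarith [this]
  have E4 : μ t * lam t * f t = f'' t := by
    have h := hmul t ht
    field_simp at h
    linarith
  -- c ≠ 0 : f'^2 - f^2 lam^2 = (f^2 lam^2)/S^2 > 0
  have hc : f' t ^ 2 - f t ^ 2 * lam t ^ 2 ≠ 0 := by
    have hS2 : 0 < S ^ 2 := by positivity
    have key : (f' t ^ 2 - f t ^ 2 * lam t ^ 2) * S ^ 2 = (f t * lam t) ^ 2 := by
      linear_combination (-(f' t * S + C * (f t * lam t))) * E0 + (f t * lam t) ^ 2 * E3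
    intro h0
    have : (f t * lam t) ^ 2 = 0 := by rw [← key, h0, zero_mul]
    exact hfl0 (pow_eq_zero_iff (n := 2) (by norm_num) |>.mp this)
  -- main algebraic elimination: (θ' - μ)(f'^2 - f^2 lam^2) * S = 0
  have step1 : f t ^ 2 * lam t * L - f' t * f'' t + f t * f' t * lam t ^ 2 = 0 := by
    linear_combination E2 / 2
  have main2 : (f t * lam t) * ((θ' t - μ t) * (f' t ^ 2 - f t ^ 2 * lam t ^ 2) * S) = 0 := by
    linear_combination (-(f t ^ 2 * lam t ^ 2)) * E1
      + (f t * lam t * (f' t * lam t + f t * L - f' t * θ' t)) * E0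
      + (f' t * S) * step1 + (S * f t ^ 2 * lam t ^ 2 - f' t ^ 2 * S) * E4
  have main : (θ' t - μ t) * (f' t ^ 2 - f t ^ 2 * lam t ^ 2) * S = 0 :=
    (mul_eq_zero.mp main2).resolve_left hfl0
  have := mul_eq_zero.mp main
  rcases this with h | h
  · rcases mul_eq_zero.mp h with h' | h'
    · linarith
    · exact absurd h' hc
  · exact absurd h hS0
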